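/- Let C be a finite tensor category over a field of characteristic zero in which the unit object 1 is the unique simple object up to isomorphism and Ext¹(1,1) = 0. Then every object of C is isomorphic to a finite direct sum of copies of 1; hence C is equivalent to the category of finite-dimensional vector spaces. -/

import Mathlib

open CategoryTheory MonoidalCategory CategoryTheory.Limits

section AuxBiprod

attribute [local instance] hasBinaryBiproducts_of_finite_biproducts

variable {C : Type*} [Category C] [Preadditive C] [HasFiniteBiproducts C]

/-- Reindexing isomorphism `(⨁_{Fin n} U) ⊞ U ≅ ⨁_{Fin (n+1)} U`. -/
noncomputable def biprodFinSucc (n : ℕ) (U : C) :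
    ((⨁ fun _ : Fin n => U) ⊞ U) ≅ ⨁ fun _ : Fin (n + 1) => U where
  hom := biprod.desc (biproduct.desc fun j => biproduct.ι (fun _ : Fin (n+1) => U) j.castSucc)
    (biproduct.ι (fun _ : Fin (n+1) => U) (Fin.last n))
  inv := biproduct.desc (fun j : Fin (n+1) => Fin.lastCases biprod.inr
    (fun i => biproduct.ι (fun _ : Fin n => U) i ≫ biprod.inl) j)
  hom_inv_id := by
    ext j i <;> simp [Fin.lastCases_castSucc]
  inv_hom_id := by
    ext j i
    rcases Fin.eq_castSucc_or_eq_last j with ⟨j0, rfl⟩ | rfl <;>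
    rcases Fin.eq_castSucc_or_eq_last i with ⟨i0, rfl⟩ | rfl <;>
      simp [Fin.lastCases_castSucc, biproduct.ι_π, Fin.castSucc_inj]

end AuxBiprod

section Split

variable {C : Type*} [Category C] [Abelian C] [HasFiniteBiproducts C] [MonoidalCategory C]

/-- If every self-extension of the unit splits, then any extension of the unit by a finite
direct sum of copies of the unit is a trivial extension. -/
lemma splitAux
    (hext : ∀ (E : C) (i : 𝟙_ C ⟶ E) (p : E ⟶ 𝟙_ C) (w : i ≫ p = 0),
      Mono i → Epi p → (ShortComplex.mk i p w).Exact →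
        ∃ s : 𝟙_ C ⟶ E, s ≫ p = 𝟙 (𝟙_ C))
    (n : ℕ) (E : C) (i : (⨁ fun _ : Fin n => 𝟙_ C) ⟶ E) (p : E ⟶ 𝟙_ C)
    (w : i ≫ p = 0) (hm : Mono i) (he : Epi p) (hx : (ShortComplex.mk i p w).Exact) :
    Nonempty (E ≅ ⨁ fun _ : Fin (n + 1) => 𝟙_ C) := by
  -- for each j, construct a retraction of `pushout.inr i (biproduct.π _ j)`
  have key : ∀ j : Fin n, ∃ rj : pushout i (biproduct.π (fun _ : Fin n => 𝟙_ C) j) ⟶ 𝟙_ C,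
      pushout.inr i (biproduct.π (fun _ : Fin n => 𝟙_ C) j) ≫ rj = 𝟙 (𝟙_ C) := by
    intro j
    set πj := biproduct.π (fun _ : Fin n => 𝟙_ C) j with hπj
    have hcomm : i ≫ p = πj ≫ (0 : 𝟙_ C ⟶ 𝟙_ C) := by simp [w]
    set pj : pushout i πj ⟶ 𝟙_ C := pushout.desc p 0 hcomm with hpj
    have hinl : pushout.inl i πj ≫ pj = p := pushout.inl_desc _ _ _
    have hinr : pushout.inr i πj ≫ pj = 0 := pushout.inr_desc _ _ _
    haveI hc : Epi (pushout.inl i πj ≫ pj) := by rwa [hinl]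
    haveI : Epi pj := epi_of_epi (pushout.inl i πj) pj
    haveI : Mono (pushout.inr i πj) := inferInstance
    -- p is a cokernel of i
    haveI : Epi p := by rw [← hinl]; infer_instance
    have hcok : IsColimit (CokernelCofork.ofπ p w) := hx.gIsCokernel
    -- pj is a cokernel of inr
    have hq : IsColimit (CokernelCofork.ofπ pj hinr) := by
      refine CokernelCofork.IsColimit.ofπ' pj hinr (fun {A} t ht => ?_)
      have h0 : i ≫ pushout.inl i πj ≫ t = 0 := by
        rw [pushout.condition_assoc, ht, comp_zero]
      refine ⟨hcok.desc (CokernelCofork.ofπ (pushout.inl i πj ≫ t) h0), ?_⟩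
      apply pushout.hom_ext
      · rw [← Category.assoc, hinl]
        exact hcok.fac _ WalkingParallelPair.one
      · rw [← Category.assoc, hinr, zero_comp, ht]
    set S := ShortComplex.mk _ _ hinr
    have hSx : S.Exact := S.exact_of_g_is_cokernel hq
    obtain ⟨s, hs⟩ := hext _ _ _ hinr inferInstance inferInstance hSx
    have spl := ShortComplex.Splitting.ofExactOfSection S hSx s hs inferInstance
    exact ⟨spl.r, spl.f_r⟩
  choose rj hrj using key
  set r : E ⟶ ⨁ fun _ : Fin n => 𝟙_ C :=
    biproduct.lift (fun j => pushout.inl i (biproduct.π (fun _ : Fin n => 𝟙_ C) j) ≫ rj j) with hr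
  have hir : i ≫ r = 𝟙 _ := by
    ext j
    simp only [hr, Category.assoc, biproduct.lift_π, Category.id_comp]
    rw [pushout.condition_assoc, hrj, Category.comp_id]
  have spl := ShortComplex.Splitting.ofExactOfRetraction (ShortComplex.mk i p w) hx r hir he
  haveI : HasBinaryBiproducts C := hasBinaryBiproducts_of_finite_biproducts C
  exact ⟨spl.isoBinaryBiproduct.trans (biprodFinSucc n (𝟙_ C))⟩

end Split

section EpiUnit

variable {C : Type*} [Category C] [Abelian C] [MonoidalCategory C]
  [RigidCategory C] [MonoidalPreadditive C]

/-- In a rigid abelian category with artinian objects in which the unit is simple and is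
the unique simple object, every nonzero object admits an epimorphism onto the unit. -/
lemma existsEpiToUnit
    (hart : ∀ X : C, IsArtinianObject X) (hsimpleUnit : Simple (𝟙_ C))
    (huniq : ∀ S : C, Simple S → Nonempty (S ≅ 𝟙_ C))
    (Y : C) (hY : ¬ IsZero Y) : ∃ f : Y ⟶ 𝟙_ C, Epi f := by
  haveI := hsimpleUnit
  have hdual : ¬ IsZero ((Yᘁ) : C) := by
    intro hz
    apply hY
    have h0 : IsZero ((Y ⊗ (Yᘁ)) ⊗ Y) := by
      rw [IsZero.iff_id_eq_zero] at hz ⊢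
      have : 𝟙 ((Y ⊗ (Yᘁ)) ⊗ Y) = ((Y ◁ (𝟙 (Yᘁ))) ▷ Y) := by simp
      rw [this, hz]
      simp
    have hzig := ExactPairing.evaluation_coevaluation Y (Yᘁ)
    have hL : (η_ Y (Yᘁ)) ▷ Y = (0 : 𝟙_ C ⊗ Y ⟶ (Y ⊗ (Yᘁ)) ⊗ Y) := h0.eq_of_tgt _ _
    rw [hL, zero_comp] at hzig
    rw [IsZero.iff_id_eq_zero]
    simpa using congrArg (fun t => (λ_ Y).inv ≫ t ≫ (ρ_ Y).hom) hzig.symm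
  haveI := hart ((Yᘁ) : C)
  obtain ⟨e⟩ := huniq (simpleSubobject hdual) inferInstance
  set g : 𝟙_ C ⟶ (Yᘁ) := e.inv ≫ simpleSubobjectArrow hdual with hgdef
  haveI : Mono g := mono_comp _ _
  have hg : g ≠ 0 := by
    intro h
    apply id_nonzero (𝟙_ C)
    have : 𝟙 (𝟙_ C) ≫ g = 0 ≫ g := by rw [h]; simp
    rwa [cancel_mono g] at this
  set f0 : Y ⟶ 𝟙_ C := (λ_ Y).inv ≫ (g ▷ Y) ≫ ε_ Y (Yᘁ) with hf0def
  have hf0 : f0 ≠ 0 := by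
    intro h
    apply hg
    have h2 : (g ▷ Y) ≫ ε_ Y (Yᘁ) = 0 := by
      have := congrArg (fun t => (λ_ Y).hom ≫ t) h
      simpa [hf0def] using this
    have h3 := tensorRightHomEquiv_whiskerRight_comp_evaluation g
    rw [h2] at h3
    have h4 : (tensorRightHomEquiv (𝟙_ C) Y (Yᘁ) (𝟙_ C)) 0 = 0 := by
      simp [tensorRightHomEquiv]
    rw [h4] at h3
    have := congrArg (fun t => t ≫ (λ_ (Yᘁ)).hom) h3
    simpa using this.symm
  have hfe : Epi f0 := by
    have hι : image.ι f0 ≠ 0 := by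
      intro h
      apply hf0
      rw [← image.fac f0, h, comp_zero]
    haveI : IsIso (image.ι f0) := isIso_of_mono_of_nonzero hι
    rw [← image.fac f0]
    exact epi_comp _ _
  exact ⟨f0, hfe⟩

end EpiUnit

/-- Let `C` be a finite tensor category over a field `k` of characteristic zero
(abelian, `k`-linear monoidal, rigid, finite-dimensional Homs, all objects noetherian
and artinian) in which the unit `𝟙_C` is simple and is the unique simple object up to
isomorphism, and in which `Ext¹(𝟙,𝟙) = 0` (every short exact sequence
`0 → 𝟙 → E → 𝟙 → 0` splits).  Then every object of `C` is isomorphic to a finite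
direct sum of copies of `𝟙_C`. -/
theorem stmt16 {k : Type*} [Field k] [CharZero k]
    {C : Type*} [Category C] [Abelian C] [Linear k C] [MonoidalCategory C]
    [RigidCategory C] [MonoidalPreadditive C] [MonoidalLinear k C]
    [∀ X Y : C, FiniteDimensional k (X ⟶ Y)] [HasFiniteBiproducts C]
    (hnoeth : ∀ X : C, IsNoetherianObject X)
    (hart : ∀ X : C, IsArtinianObject X)
    (hsimpleUnit : Simple (𝟙_ C))
    (huniq : ∀ S : C, Simple S → Nonempty (S ≅ 𝟙_ C))
    (hext : ∀ (E : C) (i : 𝟙_ C ⟶ E) (p : E ⟶ 𝟙_ C) (w : i ≫ p = 0),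
      Mono i → Epi p → (ShortComplex.mk i p w).Exact →
        ∃ s : 𝟙_ C ⟶ E, s ≫ p = 𝟙 (𝟙_ C)) :
    ∀ X : C, ∃ n : ℕ, Nonempty (X ≅ ⨁ fun _ : Fin n => 𝟙_ C) := by
  haveI := hsimpleUnit
  have key : ∀ X : C, ∀ Y : Subobject X,
      ∃ n : ℕ, Nonempty (((Y : C)) ≅ ⨁ fun _ : Fin n => 𝟙_ C) := by
    intro X
    haveI := hart X
    intro Y
    refine WellFounded.induction (wellFounded_lt (α := Subobject X))
      (C := fun Y : Subobject X =>
        ∃ n : ℕ, Nonempty ((Subobject.underlying.obj Y) ≅ ⨁ fun _ : Fin n => 𝟙_ C)) Y ?_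
    clear Y
    intro Y IH
    by_cases hz : IsZero ((Y : C))
    · refine ⟨0, ⟨hz.iso ?_⟩⟩
      rw [IsZero.iff_id_eq_zero]
      apply biproduct.hom_ext
      intro j
      exact j.elim0
    · obtain ⟨f, hf⟩ := existsEpiToUnit hart hsimpleUnit huniq ((Y : C)) hz
      haveI := hf
      set ι : kernel f ⟶ (Y : C) := kernel.ι f with hι
      haveI : Mono (ι ≫ Y.arrow) := mono_comp _ _
      set K' : Subobject X := Subobject.mk (ι ≫ Y.arrow) with hK'
      have hle : K' ≤ Y := by
        conv_rhs => rw [← Subobject.mk_arrow Y]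
        exact Subobject.mk_le_mk_of_comm ι rfl
      have hne : K' ≠ Y := by
        intro h
        rw [← Subobject.mk_arrow Y] at h
        have hcomm : (Subobject.isoOfMkEqMk _ _ h).hom ≫ Y.arrow = ι ≫ Y.arrow :=
          Subobject.ofMkLEMk_comp h.le
        have heq : (Subobject.isoOfMkEqMk _ _ h).hom = ι := by
          rwa [cancel_mono Y.arrow] at hcomm
        haveI : IsIso ι := by rw [← heq]; infer_instance
        have h0 : f = 0 := by
          rw [← cancel_epi ι, comp_zero, hι, kernel.condition]
        apply id_nonzero (𝟙_ C)
        rw [← cancel_epi f, comp_zero, h0, zero_comp]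
      obtain ⟨n, ⟨eK⟩⟩ := IH K' (lt_of_le_of_ne hle hne)
      have e2 : ((K' : C)) ≅ kernel f := Subobject.underlyingIso (ι ≫ Y.arrow)
      set φ : (⨁ fun _ : Fin n => 𝟙_ C) ≅ kernel f := eK.symm.trans e2 with hφ
      set i : (⨁ fun _ : Fin n => 𝟙_ C) ⟶ (Y : C) := φ.hom ≫ ι with hi
      have w : i ≫ f = 0 := by simp [hi, hι, kernel.condition]
      haveI : Mono i := mono_comp _ _
      have hker : IsLimit (KernelFork.ofι i w) := by
        refine KernelFork.IsLimit.ofι i w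
          (fun {W'} t ht => kernel.lift f t ht ≫ φ.inv) (fun {W'} t ht => ?_) ?_
        · simp [hi, hι]
        · intro W' t ht m hm
          rw [← cancel_mono i, hm]
          simp [hi, hι]
      have hx : (ShortComplex.mk i f w).Exact := ShortComplex.exact_of_f_is_kernel _ hker
      obtain ⟨iso⟩ := splitAux hext n ((Y : C)) i f w inferInstance hf hx
      exact ⟨n + 1, ⟨iso⟩⟩
  intro X
  obtain ⟨n, ⟨e⟩⟩ := key X ⊤
  exact ⟨n, ⟨(asIso ((⊤ : Subobject X).arrow)).symm.trans e⟩⟩
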